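/- Let p, q be fixed points of X_N with index functions a, b. Then the function c : i ↦ max(a_i, b_i) is the index function of a fixed point r of X_N, which satisfies I_r = I_p ∪ I_q (where I_p = {i : a_i = N}), and cl(C_p) ∩ cl(C_q) = cl(C_r). -/

import Mathlib

open LinearAlgebra.Projectivization Projectivization Filter Topology

noncomputable section

/-- Topology on the projectivization: quotient topology. -/
instance {K V : Type*} [DivisionRing K] [AddCommGroup V] [Module K V] [TopologicalSpace V] :
    TopologicalSpace (ℙ K V) :=
  inferInstanceAs (TopologicalSpace (Quotient (projectivizationSetoid K V)))

/-- The single nilpotent Jordan block `J_N` on `ℂ^N`: `J e_k = e_{k+1}` (`J e_N = 0`).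
Indices are 0-based here (1-based in the paper). -/
def JN (N : ℕ) : (Fin N → ℂ) →ₗ[ℂ] (Fin N → ℂ) where
  toFun u k :=
    if h : 0 < k.val then u ⟨k.val - 1, lt_of_le_of_lt (Nat.sub_le _ _) k.isLt⟩ else 0
  map_add' u v := by funext k; by_cases h : 0 < k.val <;> simp [h]
  map_smul' a u := by funext k; by_cases h : 0 < k.val <;> simp [h]

/-- The quiver Grassmannian `X_N ⊆ ℙ(ℂ^N)^{ℤ/nℤ}`. -/
def QGN (n N : ℕ) : Set (ZMod n → ℙ ℂ (Fin N → ℂ)) :=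
  {L | ∀ i : ZMod n, (L i).submodule.map (JN N) ≤ (L (i + 1)).submodule}

end
/-- The standard basis vector `e_k` of `ℂ^N`. -/
def eN {N : ℕ} (k : Fin N) : Fin N → ℂ := Pi.single k 1

lemma eN_ne_zero {N : ℕ} (k : Fin N) : eN k ≠ 0 := by
  intro h
  have := congrFun h k
  simp [eN] at this

/-- `p` is a fixed point of `X_N` with index function `a`. -/
def IsFixedPtN (n N : ℕ) (p : ZMod n → ℙ ℂ (Fin N → ℂ)) (a : ZMod n → Fin N) : Prop :=
  p ∈ QGN n N ∧ ∀ i, p i = Projectivization.mk ℂ (eN (a i)) (eN_ne_zero (a i))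
/-- The cell `C_k ⊆ ℙ(ℂ^N)`. -/
def CbN {N : ℕ} (k : Fin N) : Set (ℙ ℂ (Fin N → ℂ)) :=
  {x | ∃ (u : Fin N → ℂ) (hu : u ≠ 0),
    x = Projectivization.mk ℂ u hu ∧ u k ≠ 0 ∧ ∀ c < k, u c = 0}

/-- The BB-cell of the fixed point of `X_N` with index function `a`. -/
def cellN (n N : ℕ) (a : ZMod n → Fin N) : Set (ZMod n → ℙ ℂ (Fin N → ℂ)) :=
  QGN n N ∩ {L | ∀ i, L i ∈ CbN (a i)}

-- AUX START
namespace Aux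

lemma JN_apply {N : ℕ} (u : Fin N → ℂ) (k : Fin N) :
    JN N u k = if h : 0 < k.val then u ⟨k.val - 1, lt_of_le_of_lt (Nat.sub_le _ _) k.isLt⟩
      else 0 := rfl

lemma eN_apply {N : ℕ} (k m : Fin N) : eN k m = if m = k then 1 else 0 := Pi.single_apply ..

lemma JN_iter_apply {N : ℕ} (t : ℕ) (u : Fin N → ℂ) (k : Fin N) :
    (⇑(JN N))^[t] u k = if h : t ≤ k.val then u ⟨k.val - t, lt_of_le_of_lt (Nat.sub_le _ _) k.isLt⟩
      else 0 := by
  induction t generalizing k with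
  | zero => simp
  | succ t ih =>
    rw [Function.iterate_succ_apply', JN_apply]
    by_cases h0 : 0 < k.val
    · rw [dif_pos h0, ih]
      by_cases ht : t + 1 ≤ k.val
      · rw [dif_pos (by simp; omega), dif_pos ht]
        congr 1
        ext
        simp
        omega
      · rw [dif_neg (by simp; omega), dif_neg ht]
    · rw [dif_neg h0, dif_neg (by omega)]

lemma JN_eN {N : ℕ} (k : Fin N) (h : k.val + 1 < N) : JN N (eN k) = eN ⟨k.val + 1, h⟩ := by
  funext m
  rw [JN_apply, eN_apply]
  by_cases h0 : 0 < m.val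
  · rw [dif_pos h0, eN_apply]
    by_cases he : m = ⟨k.val + 1, h⟩
    · rw [if_pos (by subst he; ext; simp), if_pos he]
    · rw [if_neg (by intro hc; apply he; have := congrArg Fin.val hc; simp at this; ext; simp; omega), if_neg he]
  · rw [dif_neg h0, eN_apply, if_neg (by intro hc; have := congrArg Fin.val hc; simp at this; omega)]

lemma JN_eN_top {N : ℕ} (k : Fin N) (h : k.val + 1 = N) : JN N (eN k) = 0 := by
  funext m
  rw [JN_apply]
  by_cases h0 : 0 < m.val
  · rw [dif_pos h0, eN_apply, if_neg, Pi.zero_apply]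
    intro hc
    have := congrArg Fin.val hc
    simp at this
    omega
  · rw [dif_neg h0, Pi.zero_apply]

end Aux
namespace Aux

abbrev NZ (N : ℕ) := {v : Fin N → ℂ // v ≠ 0}

lemma mk_eq_mk' {N : ℕ} (v : NZ N) :
    Projectivization.mk ℂ v.1 v.2 = (Quotient.mk'' v : ℙ ℂ (Fin N → ℂ)) := rfl

lemma continuous_mkP {N : ℕ} : Continuous (fun v : NZ N => Projectivization.mk ℂ v.1 v.2) := by
  simp only [mk_eq_mk']
  exact continuous_quotient_mk'

/-- scaling as a self-map of nonzero vectors -/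
def scl {N : ℕ} (γ : ℂˣ) (v : NZ N) : NZ N :=
  ⟨(γ : ℂ) • v.1, smul_ne_zero γ.ne_zero v.2⟩

lemma continuous_scl {N : ℕ} (γ : ℂˣ) : Continuous (scl (N := N) γ) :=
  Continuous.subtype_mk ((continuous_const_smul _).comp continuous_subtype_val) _

def sclHomeo {N : ℕ} (γ : ℂˣ) : NZ N ≃ₜ NZ N where
  toFun := scl γ
  invFun := scl γ⁻¹
  left_inv v := by
    apply Subtype.ext
    simp [scl, smul_smul]
  right_inv v := by
    apply Subtype.ext
    simp [scl, smul_smul]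
  continuous_toFun := continuous_scl γ
  continuous_invFun := continuous_scl γ⁻¹

lemma isOpenQuotientMap_mkP {N : ℕ} :
    IsOpenQuotientMap (fun v : NZ N => Projectivization.mk ℂ v.1 v.2) := by
  refine ⟨fun x => ⟨⟨x.rep, x.rep_nonzero⟩, x.mk_rep⟩, continuous_mkP, ?_⟩
  intro U hU
  have hq : IsQuotientMap (fun v : NZ N => Projectivization.mk ℂ v.1 v.2) := by
    simp only [mk_eq_mk']
    exact isQuotientMap_quotient_mk'
  rw [← hq.isOpen_preimage]
  have : (fun v : NZ N => Projectivization.mk ℂ v.1 v.2) ⁻¹'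
      ((fun v : NZ N => Projectivization.mk ℂ v.1 v.2) '' U) = ⋃ γ : ℂˣ, scl γ '' U := by
    ext w
    simp only [Set.mem_preimage, Set.mem_image, Set.mem_iUnion]
    constructor
    · rintro ⟨u, hu, hmk⟩
      obtain ⟨γ, hγ⟩ := (Projectivization.mk_eq_mk_iff ℂ _ _ u.2 w.2).1 hmk
      refine ⟨γ⁻¹, u, hu, Subtype.ext ?_⟩
      show (↑γ⁻¹ : ℂ) • u.1 = w.1
      rw [← hγ, Units.smul_def, smul_smul]
      simp
    · rintro ⟨γ, u, hu, rfl⟩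
      refine ⟨u, hu, ?_⟩
      symm
      rw [Projectivization.mk_eq_mk_iff]
      exact ⟨γ, rfl⟩
  rw [this]
  exact isOpen_iUnion fun γ => (sclHomeo γ).isOpenMap U hU

/-- The product (tuple) version of `mk`. -/
noncomputable def MkT (n N : ℕ) (u : ZMod n → NZ N) : ZMod n → ℙ ℂ (Fin N → ℂ) :=
  fun i => Projectivization.mk ℂ (u i).1 (u i).2

lemma isOpenQuotientMap_MkT (n N : ℕ) : IsOpenQuotientMap (MkT n N) :=
  IsOpenQuotientMap.piMap (fun _ => isOpenQuotientMap_mkP)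

end Aux
namespace Aux

def Dep {N : ℕ} (x y : Fin N → ℂ) : Prop := ∀ k m, x k * y m = x m * y k

lemma dep_iff {N : ℕ} {x y : Fin N → ℂ} (hy : y ≠ 0) : Dep x y ↔ ∃ c : ℂ, x = c • y := by
  constructor
  · intro h
    obtain ⟨m, hm⟩ : ∃ m, y m ≠ 0 := by
      by_contra hc; push_neg at hc; exact hy (funext hc)
    refine ⟨x m / y m, funext fun k => ?_⟩
    have h2 := h k m
    simp only [Pi.smul_apply, smul_eq_mul]
    field_simp
    linear_combination h2
  · rintro ⟨c, rfl⟩ k m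
    simp only [Pi.smul_apply, smul_eq_mul]
    ring

def UpZ (n N : ℕ) (a : ZMod n → Fin N) : Set (ZMod n → NZ N) :=
  {u | ∀ i, Dep (JN N (u i).1) ((u (i+1)).1) ∧
    ∀ k : Fin N, (k : ℕ) < (a i : ℕ) → (u i).1 k = 0}

lemma continuous_coord {n N : ℕ} (i : ZMod n) (k : Fin N) :
    Continuous (fun u : ZMod n → NZ N => (u i).1 k) :=
  (continuous_apply k).comp (continuous_subtype_val.comp (continuous_apply i))

lemma continuous_Jcoord {n N : ℕ} (i : ZMod n) (k : Fin N) :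
    Continuous (fun u : ZMod n → NZ N => JN N (u i).1 k) := by
  by_cases h : 0 < k.val
  · simp only [JN_apply, dif_pos h]
    exact continuous_coord i _
  · simp only [JN_apply, dif_neg h]
    exact continuous_const

lemma isClosed_UpZ (n N : ℕ) (a : ZMod n → Fin N) : IsClosed (UpZ n N a) := by
  have : UpZ n N a = ⋂ i : ZMod n,
      ((⋂ (k : Fin N) (m : Fin N),
        {u : ZMod n → NZ N |
          JN N (u i).1 k * ((u (i+1)).1) m = JN N (u i).1 m * ((u (i+1)).1) k}) ∩
       (⋂ (k : Fin N) (_ : (k : ℕ) < (a i : ℕ)), {u : ZMod n → NZ N | (u i).1 k = 0})) := by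
    ext u
    simp only [UpZ, Set.mem_setOf_eq, Set.mem_iInter, Set.mem_inter_iff]
    exact forall_congr' fun i => by tauto
  rw [this]
  refine isClosed_iInter fun i => IsClosed.inter ?_ ?_
  · exact isClosed_iInter fun k => isClosed_iInter fun m =>
      isClosed_eq ((continuous_Jcoord i k).mul (continuous_coord (i+1) m))
        ((continuous_Jcoord i m).mul (continuous_coord (i+1) k))
  · exact isClosed_iInter fun k => isClosed_iInter fun _ =>
      isClosed_eq (continuous_coord i k) continuous_const

lemma MkT_apply {n N : ℕ} (u : ZMod n → NZ N) (i : ZMod n) :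
    MkT n N u i = Projectivization.mk ℂ (u i).1 (u i).2 := rfl

lemma mem_QGN_iff {n N : ℕ} (u : ZMod n → NZ N) :
    MkT n N u ∈ QGN n N ↔ ∀ i, ∃ c : ℂ, JN N (u i).1 = c • (u (i+1)).1 := by
  unfold QGN
  simp only [Set.mem_setOf_eq, MkT_apply, Projectivization.submodule_mk]
  refine forall_congr' fun i => ?_
  rw [Submodule.map_span, Set.image_singleton, Submodule.span_singleton_le_iff_mem,
    Submodule.mem_span_singleton]
  constructor
  · rintro ⟨c, hc⟩; exact ⟨c, hc.symm⟩
  · rintro ⟨c, hc⟩; exact ⟨c, hc.symm⟩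

lemma preimage_cell_subset_UpZ (n N : ℕ) (a : ZMod n → Fin N) :
    MkT n N ⁻¹' (cellN n N a) ⊆ UpZ n N a := by
  intro u hu
  obtain ⟨hQ, hC⟩ := hu
  intro i
  constructor
  · obtain ⟨c, hc⟩ := (mem_QGN_iff u).1 hQ i
    exact (dep_iff (u (i+1)).2).2 ⟨c, hc⟩
  · intro k hk
    obtain ⟨v, hv, hmk, -, hvan⟩ := hC i
    obtain ⟨γ, hγ⟩ := (Projectivization.mk_eq_mk_iff ℂ _ _ (u i).2 hv).1 hmk
    have : (γ : ℂ) • v k = (u i).1 k := by rw [← hγ]; rfl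
    rw [← this, hvan k (by rwa [Fin.lt_def]), smul_zero]

/-- the canonical representative tuple -/
noncomputable def repT {n N : ℕ} (L : ZMod n → ℙ ℂ (Fin N → ℂ)) : ZMod n → NZ N :=
  fun i => ⟨(L i).rep, (L i).rep_nonzero⟩

lemma MkT_repT {n N : ℕ} (L : ZMod n → ℙ ℂ (Fin N → ℂ)) : MkT n N (repT L) = L :=
  funext fun i => (L i).mk_rep

lemma repT_mem_UpZ_of_closure {n N : ℕ} {a : ZMod n → Fin N}
    {L : ZMod n → ℙ ℂ (Fin N → ℂ)} (h : L ∈ closure (cellN n N a)) :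
    repT L ∈ UpZ n N a := by
  have hM := isOpenQuotientMap_MkT n N
  have h1 : repT L ∈ MkT n N ⁻¹' closure (cellN n N a) := by
    rw [Set.mem_preimage, MkT_repT]; exact h
  rw [hM.isOpenMap.preimage_closure_eq_closure_preimage hM.continuous] at h1
  exact closure_minimal (preimage_cell_subset_UpZ n N a) (isClosed_UpZ n N a) h1

end Aux
namespace Aux

lemma finValMax {N : ℕ} (x y : Fin N) : (max x y : Fin N).val = max x.val y.val := by
  rcases le_total x y with h | h
  · rw [max_eq_right h, Nat.max_eq_right (Fin.le_def.1 h)]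
  · rw [max_eq_left h, Nat.max_eq_left (Fin.le_def.1 h)]

def Step (n N : ℕ) (a : ZMod n → Fin N) : Prop :=
  ∀ i : ZMod n, (a i : ℕ) + 1 < N → (a (i + 1) : ℕ) = (a i : ℕ) + 1

lemma step_of_fixed {n N : ℕ} {p : ZMod n → ℙ ℂ (Fin N → ℂ)} {a : ZMod n → Fin N}
    (hp : IsFixedPtN n N p a) : Step n N a := by
  intro i hi
  have hQ := hp.1 i
  rw [hp.2 i, hp.2 (i + 1), Projectivization.submodule_mk, Projectivization.submodule_mk,
    Submodule.map_span, Set.image_singleton, Submodule.span_singleton_le_iff_mem,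
    Submodule.mem_span_singleton] at hQ
  obtain ⟨c, hc⟩ := hQ
  rw [JN_eN (a i) hi] at hc
  by_contra hne
  have h1 := congrFun hc ⟨(a i : ℕ) + 1, hi⟩
  rw [Pi.smul_apply, eN_apply, eN_apply, if_pos rfl,
    if_neg (fun he => hne (by rw [← he]))] at h1
  simp at h1

lemma step_max {n N : ℕ} {a b : ZMod n → Fin N} (ha : Step n N a) (hb : Step n N b) :
    Step n N (fun i => max (a i) (b i)) := by
  intro i hi
  simp only [finValMax] at hi ⊢
  have h1 := ha i (by omega)
  have h2 := hb i (by omega)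
  omega

lemma isFixedPt_max {n N : ℕ} {p q : ZMod n → ℙ ℂ (Fin N → ℂ)} {a b : ZMod n → Fin N}
    (hp : IsFixedPtN n N p a) (hq : IsFixedPtN n N q b) :
    IsFixedPtN n N
      (fun i => Projectivization.mk ℂ (eN (max (a i) (b i))) (eN_ne_zero _))
      (fun i => max (a i) (b i)) := by
  refine ⟨?_, fun i => rfl⟩
  intro i
  simp only [Projectivization.submodule_mk]
  rw [Submodule.map_span, Set.image_singleton, Submodule.span_singleton_le_iff_mem,
    Submodule.mem_span_singleton]
  by_cases h : (max (a i) (b i) : ℕ) + 1 < N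
  · have hstep := step_max (step_of_fixed hp) (step_of_fixed hq) i h
    have : max (a (i + 1)) (b (i + 1)) = ⟨(max (a i) (b i) : ℕ) + 1, h⟩ := Fin.ext hstep
    rw [JN_eN _ h, this]
    exact ⟨1, one_smul _ _⟩
  · have htop : (max (a i) (b i) : ℕ) + 1 = N := by
      have := (max (a i) (b i)).isLt; omega
    rw [JN_eN_top _ htop]
    exact ⟨0, by simp⟩

lemma breakset_eq {n N : ℕ} (a b : ZMod n → Fin N) :
    {i : ZMod n | ((max (a i) (b i) : Fin N) : ℕ) = N - 1} =
      {i : ZMod n | (a i : ℕ) = N - 1} ∪ {i : ZMod n | (b i : ℕ) = N - 1} := by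
  ext i
  simp only [Set.mem_setOf_eq, Set.mem_union, finValMax]
  have := (a i).isLt
  have := (b i).isLt
  omega

end Aux
namespace Aux

/-- `j` is a "break" of the tuple `r`: all coordinates below the top one vanish. -/
def Br {n : ℕ} (N : ℕ) (r : ZMod n → Fin N → ℂ) (j : ZMod n) : Prop :=
  ∀ k : Fin N, (k : ℕ) < N - 1 → r j k = 0

lemma exists_fwd {n N : ℕ} (hn : 1 ≤ n) {r : ZMod n → Fin N → ℂ} (hbr : ∃ j, Br N r j)
    (i : ZMod n) : ∃ t : ℕ, Br N r (i + (t : ℕ)) := by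
  haveI : NeZero n := ⟨by omega⟩
  obtain ⟨j, hj⟩ := hbr
  refine ⟨(j - i).val, ?_⟩
  have h1 : (((j - i).val : ℕ) : ZMod n) = j - i := ZMod.natCast_rightInverse (j - i)
  rw [h1]
  simpa using hj

lemma exists_back {n N : ℕ} (hn : 1 ≤ n) {r : ZMod n → Fin N → ℂ} (hbr : ∃ j, Br N r j)
    (i : ZMod n) : ∃ t : ℕ, Br N r (i - ((t : ℕ) + 1)) := by
  haveI : NeZero n := ⟨by omega⟩
  obtain ⟨j, hj⟩ := hbr
  refine ⟨(i - 1 - j).val, ?_⟩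
  have h1 : (((i - 1 - j).val : ℕ) : ZMod n) = i - 1 - j := ZMod.natCast_rightInverse _
  rw [h1]
  have : i - (i - 1 - j + 1) = j := by ring
  rw [this]
  exact hj

open Classical in
/-- distance forward to the next break -/
noncomputable def dP {n N : ℕ} {r : ZMod n → Fin N → ℂ}
    (hf : ∀ i : ZMod n, ∃ t : ℕ, Br N r (i + (t : ℕ))) (i : ZMod n) : ℕ :=
  Nat.find (hf i)

open Classical in
/-- distance backward to the previous break, minus one -/
noncomputable def pP {n N : ℕ} {r : ZMod n → Fin N → ℂ}
    (hb : ∀ i : ZMod n, ∃ t : ℕ, Br N r (i - ((t : ℕ) + 1))) (i : ZMod n) : ℕ :=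
  Nat.find (hb i)

section HardSetup

variable {n N : ℕ} {r : ZMod n → Fin N → ℂ}
  {hb : ∀ i : ZMod n, ∃ t : ℕ, Br N r (i - ((t : ℕ) + 1))}
  {hf : ∀ i : ZMod n, ∃ t : ℕ, Br N r (i + (t : ℕ))}

open Classical

lemma dP_spec (i : ZMod n) : Br N r (i + (dP hf i : ℕ)) := Nat.find_spec (hf i)

lemma dP_min {i : ZMod n} {t : ℕ} (h : t < dP hf i) : ¬ Br N r (i + (t : ℕ)) :=
  Nat.find_min (hf i) h

lemma dP_le {i : ZMod n} {t : ℕ} (h : Br N r (i + (t : ℕ))) : dP hf i ≤ t :=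
  Nat.find_le h

lemma pP_spec (i : ZMod n) : Br N r (i - ((pP hb i : ℕ) + 1)) := Nat.find_spec (hb i)

lemma pP_min {i : ZMod n} {t : ℕ} (h : t < pP hb i) : ¬ Br N r (i - ((t : ℕ) + 1)) :=
  Nat.find_min (hb i) h

lemma pP_succ_of_not_br {i : ZMod n} (h : ¬ Br N r i) : pP hb (i + 1) = pP hb i + 1 := by
  rw [pP, Nat.find_eq_iff]
  constructor
  · have := pP_spec (hb := hb) i
    have he : i + 1 - (((pP hb i + 1 : ℕ) : ZMod n) + 1) = i - ((pP hb i : ℕ) + 1) := by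
      push_cast; ring
    rwa [he]
  · intro t ht
    rcases Nat.eq_zero_or_pos t with h0 | h0
    · subst h0
      have he : i + 1 - (((0 : ℕ) : ZMod n) + 1) = i := by push_cast; ring
      rwa [he]
    · obtain ⟨s, rfl⟩ := Nat.exists_eq_succ_of_ne_zero (by omega : t ≠ 0)
      have he : i + 1 - (((s + 1 : ℕ) : ZMod n) + 1) = i - ((s : ℕ) + 1) := by push_cast; ring
      rw [he]
      exact pP_min (by omega)

lemma pP_zero_of_br {i : ZMod n} (h : Br N r i) : pP hb (i + 1) = 0 := by
  rw [pP, Nat.find_eq_iff]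
  refine ⟨?_, by omega⟩
  have he : i + 1 - (((0 : ℕ) : ZMod n) + 1) = i := by push_cast; ring
  rwa [he]

lemma pP_pos_not_br {i : ZMod n} (h : 0 < pP hb i) : ¬ Br N r (i - 1) := by
  have := pP_min (hb := hb) (i := i) (t := 0) h
  simpa using this

/-- the normalized representative tuple -/
noncomputable def uT (hb : ∀ i : ZMod n, ∃ t : ℕ, Br N r (i - ((t : ℕ) + 1)))
    (i : ZMod n) : Fin N → ℂ :=
  (⇑(JN N))^[pP hb i] (r (i - (pP hb i : ℕ)))

lemma uT_succ_of_not_br {i : ZMod n} (h : ¬ Br N r i) : uT hb (i + 1) = JN N (uT hb i) := by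
  rw [uT, uT, pP_succ_of_not_br h, Function.iterate_succ_apply']
  congr 2
  push_cast
  ring

lemma uT_succ_of_br {i : ZMod n} (h : Br N r i) : uT hb (i + 1) = r (i + 1) := by
  rw [uT, pP_zero_of_br h]
  simp

end HardSetup

end Aux
namespace Aux

section HardSetup2

variable {n N : ℕ} {r : ZMod n → Fin N → ℂ}
  {hb : ∀ i : ZMod n, ∃ t : ℕ, Br N r (i - ((t : ℕ) + 1))}
  {hf : ∀ i : ZMod n, ∃ t : ℕ, Br N r (i + (t : ℕ))}

lemma not_br_J_ne {i : ZMod n} (h : ¬ Br N r i) : JN N (r i) ≠ 0 := by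
  rw [Br] at h
  push_neg at h
  obtain ⟨k, hk, hne⟩ := h
  intro hc
  apply hne
  have h2 := congrFun hc ⟨k.val + 1, by omega⟩
  rw [JN_apply, dif_pos (by simp)] at h2
  simpa using h2

lemma step_r (hr0 : ∀ i, r i ≠ 0) (hDep : ∀ i, Dep (JN N (r i)) (r (i + 1)))
    {i : ZMod n} (h : ¬ Br N r i) :
    ∃ c : ℂ, c ≠ 0 ∧ r (i + 1) = c • JN N (r i) := by
  obtain ⟨c, hc⟩ := (dep_iff (hr0 (i + 1))).1 (hDep i)
  have hc0 : c ≠ 0 := by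
    intro h0
    exact not_br_J_ne h (by rw [hc, h0, zero_smul])
  refine ⟨c⁻¹, inv_ne_zero hc0, ?_⟩
  rw [hc, smul_smul, inv_mul_cancel₀ hc0, one_smul]

lemma uT_eq_smul (hr0 : ∀ i, r i ≠ 0) (hDep : ∀ i, Dep (JN N (r i)) (r (i + 1)))
    (i : ZMod n) : ∃ c : ℂ, c ≠ 0 ∧ uT hb i = c • r i := by
  suffices h : ∀ (m : ℕ) (i : ZMod n), pP hb i = m → ∃ c : ℂ, c ≠ 0 ∧ uT hb i = c • r i from
    h (pP hb i) i rfl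
  intro m
  induction m with
  | zero =>
    intro i hm
    refine ⟨1, one_ne_zero, ?_⟩
    rw [uT, hm]
    simp
  | succ m ih =>
    intro i hm
    have hnb : ¬ Br N r (i - 1) := pP_pos_not_br (hb := hb) (by omega)
    have hp : pP hb i = pP hb (i - 1) + 1 := by
      have := pP_succ_of_not_br (hb := hb) hnb
      rwa [sub_add_cancel] at this
    obtain ⟨c, hc0, hc⟩ := ih (i - 1) (by omega)
    have hud : uT hb i = JN N (uT hb (i - 1)) := by
      have := uT_succ_of_not_br (hb := hb) hnb
      rwa [sub_add_cancel] at this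
    obtain ⟨c', hc'0, hc'⟩ := step_r hr0 hDep hnb
    rw [sub_add_cancel] at hc'
    refine ⟨c * c'⁻¹, by simp [hc0, hc'0], ?_⟩
    rw [hud, hc, map_smul, hc', smul_smul]
    congr 1
    field_simp

lemma uT_ne (hr0 : ∀ i, r i ≠ 0) (hDep : ∀ i, Dep (JN N (r i)) (r (i + 1)))
    (i : ZMod n) : uT hb i ≠ 0 := by
  obtain ⟨c, hc0, hc⟩ := uT_eq_smul (hb := hb) hr0 hDep i
  rw [hc]
  exact smul_ne_zero hc0 (hr0 i)

lemma uT_br_van (hr0 : ∀ i, r i ≠ 0) (hDep : ∀ i, Dep (JN N (r i)) (r (i + 1)))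
    {j : ZMod n} (h : Br N r j) : ∀ k : Fin N, (k : ℕ) < N - 1 → uT hb j k = 0 := by
  intro k hk
  obtain ⟨c, hc0, hc⟩ := uT_eq_smul (hb := hb) hr0 hDep j
  rw [hc, Pi.smul_apply, h k hk, smul_zero]

lemma uT_br_top_ne (hr0 : ∀ i, r i ≠ 0) (hDep : ∀ i, Dep (JN N (r i)) (r (i + 1)))
    (hN : 1 ≤ N) {j : ZMod n} (h : Br N r j) : uT hb j ⟨N - 1, by omega⟩ ≠ 0 := by
  intro hc
  apply uT_ne (hb := hb) hr0 hDep j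
  funext k
  rcases Nat.lt_or_ge k.val (N - 1) with hk | hk
  · exact uT_br_van hr0 hDep h k hk
  · have : k = ⟨N - 1, by omega⟩ := by ext; have := k.isLt; simp; omega
    rw [this]
    exact hc

lemma uT_chain {i : ZMod n} : ∀ t : ℕ, t ≤ dP hf i → uT hb (i + (t : ℕ)) = (⇑(JN N))^[t] (uT hb i) := by
  intro t
  induction t with
  | zero => intro _; simp
  | succ t ih =>
    intro ht
    have hnb : ¬ Br N r (i + (t : ℕ)) := dP_min (hf := hf) (by omega)
    have he : i + ((t + 1 : ℕ) : ZMod n) = (i + (t : ℕ)) + 1 := by push_cast; ring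
    rw [he, uT_succ_of_not_br hnb, ih (by omega), Function.iterate_succ_apply']

lemma uT_coord_of_le (hN : 1 ≤ N) {i : ZMod n} {t : ℕ} (ht : t ≤ dP hf i) (htN : t ≤ N - 1) :
    uT hb i ⟨N - 1 - t, by omega⟩ = uT hb (i + (t : ℕ)) ⟨N - 1, by omega⟩ := by
  rw [uT_chain (hf := hf) t ht, JN_iter_apply, dif_pos (by simp; omega)]

lemma uT_coord_zero (hr0 : ∀ i, r i ≠ 0) (hDep : ∀ i, Dep (JN N (r i)) (r (i + 1)))
    {i : ZMod n} {m : Fin N} (hm : (m : ℕ) < N - 1 - dP hf i) : uT hb i m = 0 := by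
  have hbr := dP_spec (hf := hf) i
  have h1 := uT_br_van (hb := hb) hr0 hDep hbr ⟨m.val + dP hf i, by omega⟩ (by simp; omega)
  rw [uT_chain (hf := hf) (dP hf i) le_rfl, JN_iter_apply, dif_pos (by simp)] at h1
  have he : (⟨(⟨m.val + dP hf i, by omega⟩ : Fin N).val - dP hf i, by omega⟩ : Fin N) = m := by
    ext; simp
  rwa [he] at h1

end HardSetup2

end Aux
namespace Aux

lemma coordSum {N : ℕ} (hN : 1 ≤ N) (M : ℕ) (hM : M ≤ N - 1) (f : ℕ → ℂ) (k : Fin N) :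
    (∑ t ∈ Finset.range (M + 1), f t • eN (⟨N - 1 - t, by omega⟩ : Fin N)) k =
      if N - 1 - M ≤ (k : ℕ) then f (N - 1 - (k : ℕ)) else 0 := by
  rw [Finset.sum_apply]
  have hkN : (k : ℕ) ≤ N - 1 := by have := k.isLt; omega
  by_cases hk : N - 1 - M ≤ (k : ℕ)
  · rw [if_pos hk]
    rw [Finset.sum_eq_single_of_mem (N - 1 - (k : ℕ)) (Finset.mem_range.2 (by omega))]
    · rw [Pi.smul_apply, eN_apply, if_pos (by ext; simp; omega), smul_eq_mul, mul_one]
    · intro b hb hbne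
      rw [Finset.mem_range] at hb
      rw [Pi.smul_apply, eN_apply, if_neg, smul_eq_mul, mul_zero]
      intro hc
      apply hbne
      have := congrArg Fin.val hc
      simp at this
      omega
  · rw [if_neg hk]
    refine Finset.sum_eq_zero fun t ht => ?_
    rw [Finset.mem_range] at ht
    rw [Pi.smul_apply, eN_apply, if_neg, smul_eq_mul, mul_zero]
    intro hc
    have := congrArg Fin.val hc
    simp at this
    omega

open Classical in
/-- the exponent function: number of breaks in the window `[i, i+t)` -/
noncomputable def GP {n N : ℕ} (r : ZMod n → Fin N → ℂ) (i : ZMod n) (t : ℕ) : ℕ :=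
  ∑ s ∈ Finset.range t, (if Br N r (i + (s : ℕ)) then 1 else 0)

section Gsec

variable {n N : ℕ} {r : ZMod n → Fin N → ℂ}
  {hf : ∀ i : ZMod n, ∃ t : ℕ, Br N r (i + (t : ℕ))}

open Classical

lemma GP_succ' (i : ZMod n) (t : ℕ) :
    GP r i (t + 1) = (if Br N r i then 1 else 0) + GP r (i + 1) t := by
  rw [GP, Finset.sum_range_succ', add_comm]
  congr 1
  · simp
  · rw [GP]
    refine Finset.sum_congr rfl fun s _ => ?_
    have he : i + ((s + 1 : ℕ) : ZMod n) = (i + 1) + (s : ℕ) := by push_cast; ring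
    rw [he]

lemma GP_zero {i : ZMod n} {t : ℕ} (h : t ≤ dP hf i) : GP r i t = 0 := by
  refine Finset.sum_eq_zero fun s hs => ?_
  rw [Finset.mem_range] at hs
  rw [if_neg (dP_min (hf := hf) (by omega))]

lemma GP_pos {i : ZMod n} {t : ℕ} (h : dP hf i < t) : 0 < GP r i t := by
  have h1 : (if Br N r (i + ((dP hf i : ℕ) : ZMod n)) then (1:ℕ) else 0) ≤ GP r i t :=
    Finset.single_le_sum (f := fun s : ℕ => if Br N r (i + (s : ℕ)) then (1:ℕ) else 0)
      (fun s _ => by positivity) (Finset.mem_range.2 h)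
  rw [if_pos (dP_spec (hf := hf) i)] at h1
  omega

end Gsec

end Aux
namespace Aux

open Classical in
lemma mem_closure_cellN {n N : ℕ} (hn : 1 ≤ n) (hN : 1 ≤ N) {a : ZMod n → Fin N}
    (hstep : Step n N a) {L : ZMod n → ℙ ℂ (Fin N → ℂ)}
    (hu : repT L ∈ UpZ n N a) : L ∈ closure (cellN n N a) := by
  haveI : NeZero n := ⟨by omega⟩
  have hr0 : ∀ i, (L i).rep ≠ 0 := fun i => (L i).rep_nonzero
  set r : ZMod n → Fin N → ℂ := fun i => (L i).rep with hrdef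
  have hDep : ∀ i, Dep (JN N (r i)) (r (i + 1)) := fun i => (hu i).1
  have hvan : ∀ i, ∀ k : Fin N, (k : ℕ) < (a i : ℕ) → r i k = 0 := fun i => (hu i).2
  -- iteration of the step property
  have hAV : ∀ (i : ZMod n) (t : ℕ), t ≤ N - 1 - (a i).val →
      (a (i + (t : ℕ))).val = (a i).val + t := by
    intro i t
    induction t with
    | zero => intro _; simp
    | succ t ih =>
      intro ht
      have h1 := ih (by omega)
      have he : i + ((t + 1 : ℕ) : ZMod n) = (i + (t : ℕ)) + 1 := by push_cast; ring
      rw [he]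
      have h2 := hstep (i + (t : ℕ)) (by omega)
      omega
  have habr : ∀ i : ZMod n, (a i).val = N - 1 → Br N r i := fun i hi k hk =>
    hvan i k (by omega)
  have hbr : ∃ j, Br N r j := by
    refine ⟨(0 : ZMod n) + ((N - 1 - (a 0).val : ℕ) : ZMod n), habr _ ?_⟩
    have h1 := hAV 0 (N - 1 - (a 0).val) le_rfl
    have h2 := (a 0).isLt
    omega
  have hb : ∀ i : ZMod n, ∃ t : ℕ, Br N r (i - ((t : ℕ) + 1)) := exists_back hn hbr
  have hf : ∀ i : ZMod n, ∃ t : ℕ, Br N r (i + (t : ℕ)) := exists_fwd hn hbr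
  -- top coefficients
  set T : ZMod n → ℂ := fun j => uT hb j ⟨N - 1, by omega⟩ with hTdef
  have hTne : ∀ j, Br N r j → T j ≠ 0 := fun j hj => uT_br_top_ne hr0 hDep hN hj
  -- d i ≤ ℓ i
  have hdle : ∀ i : ZMod n, dP hf i ≤ N - 1 - (a i).val := by
    intro i
    refine dP_le (habr _ ?_)
    have h1 := hAV i (N - 1 - (a i).val) le_rfl
    have h2 := (a i).isLt
    omega
  -- coordinates of u
  have hucoord : ∀ (i : ZMod n) (k : Fin N),
      uT hb i k = if N - 1 - dP hf i ≤ (k : ℕ) then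
        T (i + ((N - 1 - (k : ℕ) : ℕ) : ZMod n)) else 0 := by
    intro i k
    have hkN := k.isLt
    by_cases hk : N - 1 - dP hf i ≤ (k : ℕ)
    · rw [if_pos hk]
      have h2 := uT_coord_of_le (hb := hb) (hf := hf) hN (i := i)
        (t := N - 1 - (k : ℕ)) (by omega) (by omega)
      have he : (⟨N - 1 - (N - 1 - (k : ℕ)), by omega⟩ : Fin N) = k := by ext; simp; omega
      rw [he] at h2
      rw [h2, hTdef]
    · rw [if_neg hk]
      exact uT_coord_zero hr0 hDep (by omega)
  -- the approximating family
  set x : ℂ → ZMod n → Fin N → ℂ := fun ε i =>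
    ∑ t ∈ Finset.range ((N - 1 - (a i).val) + 1),
      (ε ^ (GP r i t) * T (i + (t : ℕ))) • eN (⟨N - 1 - t, by omega⟩ : Fin N) with hxdef
  have hxcoord : ∀ (ε : ℂ) (i : ZMod n) (k : Fin N),
      x ε i k = if (a i).val ≤ (k : ℕ) then
        ε ^ (GP r i (N - 1 - (k : ℕ))) * T (i + ((N - 1 - (k : ℕ) : ℕ) : ZMod n)) else 0 := by
    intro ε i k
    have hai := (a i).isLt
    simp only [hxdef]
    rw [coordSum hN (N - 1 - (a i).val) (by omega) (fun t => ε ^ (GP r i t) * T (i + (t : ℕ))) k]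
    by_cases hk : (a i).val ≤ (k : ℕ)
    · rw [if_pos (by omega), if_pos hk]
    · rw [if_neg (by omega), if_neg hk]
  -- value at 0
  have hx0 : ∀ i, x 0 i = uT hb i := by
    intro i
    funext k
    rw [hxcoord, hucoord]
    have hki := k.isLt
    have hdl := hdle i
    by_cases h1 : N - 1 - dP hf i ≤ (k : ℕ)
    · rw [if_pos (by omega), if_pos h1,
        GP_zero (hf := hf) (by omega : N - 1 - (k : ℕ) ≤ dP hf i), pow_zero, one_mul]
    · rw [if_neg h1]
      by_cases h2 : (a i).val ≤ (k : ℕ)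
      · rw [if_pos h2, zero_pow (by
          have := GP_pos (hf := hf) (by omega : dP hf i < N - 1 - (k : ℕ))
          omega), zero_mul]
      · rw [if_neg h2]
  -- the top coefficient along the a-break is nonzero
  have hane : ∀ i : ZMod n, T (i + ((N - 1 - (a i).val : ℕ) : ZMod n)) ≠ 0 := by
    intro i
    apply hTne
    apply habr
    have h1 := hAV i (N - 1 - (a i).val) le_rfl
    have h2 := (a i).isLt
    omega
  have hxne : ∀ (ε : ℂ) (i : ZMod n), x ε i ≠ 0 := by
    intro ε i
    rcases eq_or_ne ε 0 with rfl | hε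
    · rw [hx0]
      exact uT_ne hr0 hDep i
    · intro hc
      have h1 := congrFun hc (a i)
      rw [hxcoord, if_pos le_rfl, Pi.zero_apply] at h1
      exact (mul_ne_zero (pow_ne_zero _ hε) (hane i)) h1
  -- J-compatibility
  have hxQ : ∀ (ε : ℂ) (i : ZMod n), ∃ c : ℂ, JN N (x ε i) = c • x ε (i + 1) := by
    intro ε i
    have hai := (a i).isLt
    by_cases htop : (a i).val + 1 < N
    · refine ⟨ε ^ (if Br N r i then 1 else 0), ?_⟩
      funext k
      have hkN := k.isLt
      have h1 := hstep i htop
      rw [Pi.smul_apply, smul_eq_mul, JN_apply]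
      by_cases hk0 : 0 < (k : ℕ)
      · rw [dif_pos hk0, hxcoord ε i ⟨(k : ℕ) - 1, by omega⟩, hxcoord ε (i + 1) k]
        by_cases hk1 : (a i).val ≤ (k : ℕ) - 1
        · have hc1 : (a i).val ≤ ((⟨(k : ℕ) - 1, by omega⟩ : Fin N) : ℕ) := by simpa using hk1
          have hc2 : (a (i + 1)).val ≤ (k : ℕ) := by omega
          rw [if_pos hc1, if_pos hc2]
          have hGs := GP_succ' (r := r) i (N - 1 - (k : ℕ))
          have he1 : N - 1 - ((⟨(k : ℕ) - 1, by omega⟩ : Fin N) : ℕ) = (N - 1 - (k : ℕ)) + 1 := by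
            simp only [Fin.val_mk]
            omega
          rw [he1]
          have he2 : i + (((N - 1 - (k : ℕ)) + 1 : ℕ) : ZMod n) =
              (i + 1) + ((N - 1 - (k : ℕ) : ℕ) : ZMod n) := by push_cast; ring
          rw [he2, hGs, pow_add]
          ring
        · have hc1 : ¬ ((a i).val ≤ ((⟨(k : ℕ) - 1, by omega⟩ : Fin N) : ℕ)) := by
            simpa using hk1
          have hc2 : ¬ ((a (i + 1)).val ≤ (k : ℕ)) := by omega
          rw [if_neg hc1, if_neg hc2, mul_zero]
      · have hc3 : ¬ ((a (i + 1)).val ≤ (k : ℕ)) := by omega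
        rw [dif_neg hk0, hxcoord ε (i + 1) k, if_neg hc3, mul_zero]
    · refine ⟨0, ?_⟩
      rw [zero_smul]
      funext k
      have hkN := k.isLt
      rw [JN_apply]
      by_cases hk0 : 0 < (k : ℕ)
      · rw [dif_pos hk0, hxcoord, if_neg (by simp; omega), Pi.zero_apply]
      · rw [dif_neg hk0, Pi.zero_apply]
  -- membership in the cell for ε ≠ 0
  have hcell : ∀ ε : ℂ, ε ≠ 0 →
      (fun i => Projectivization.mk ℂ (x ε i) (hxne ε i)) ∈ cellN n N a := by
    intro ε hε
    refine ⟨?_, ?_⟩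
    · have hMk : (fun i => Projectivization.mk ℂ (x ε i) (hxne ε i)) =
        MkT n N (fun i => ⟨x ε i, hxne ε i⟩) := rfl
      rw [hMk, mem_QGN_iff]
      exact fun i => hxQ ε i
    · intro i
      refine ⟨x ε i, hxne ε i, rfl, ?_, ?_⟩
      · rw [hxcoord, if_pos le_rfl]
        exact mul_ne_zero (pow_ne_zero _ hε) (hane i)
      · intro c hc
        rw [hxcoord, if_neg (by rw [Fin.lt_def] at hc; omega)]
  -- continuity in ε
  have hcont : ∀ i : ZMod n, Continuous (fun ε : ℂ => x ε i) := by
    intro i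
    simp only [hxdef]
    exact continuous_finset_sum _ fun t _ =>
      ((continuous_pow _).mul continuous_const).smul continuous_const
  -- convergence
  have htend : Tendsto (fun ε : ℂ => (fun i => Projectivization.mk ℂ (x ε i) (hxne ε i)))
      (𝓝[≠] (0 : ℂ)) (𝓝 L) := by
    rw [tendsto_pi_nhds]
    intro i
    have h1 : Tendsto (fun ε : ℂ => x ε i) (𝓝[≠] (0 : ℂ)) (𝓝 (uT hb i)) := by
      have h2 := (hcont i).tendsto 0
      rw [hx0 i] at h2
      exact h2.mono_left nhdsWithin_le_nhds
    have h2 : Tendsto (fun ε : ℂ => (⟨x ε i, hxne ε i⟩ : NZ N)) (𝓝[≠] (0 : ℂ))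
        (𝓝 (⟨uT hb i, uT_ne hr0 hDep i⟩ : NZ N)) := by
      rw [tendsto_subtype_rng]
      exact h1
    have h3 := (continuous_mkP.tendsto _).comp h2
    have h4 : Projectivization.mk ℂ (uT hb i) (uT_ne hr0 hDep i) = L i := by
      obtain ⟨c, hc0, hc⟩ := uT_eq_smul (hb := hb) hr0 hDep i
      have h5 : Projectivization.mk ℂ (uT hb i) (uT_ne hr0 hDep i) =
          Projectivization.mk ℂ (r i) (hr0 i) := by
        rw [Projectivization.mk_eq_mk_iff]
        exact ⟨Units.mk0 c hc0, by simpa [Units.smul_def] using hc.symm⟩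
      exact h5.trans ((L i).mk_rep)
    rw [← h4]
    exact h3
  exact mem_closure_of_tendsto htend
    (eventually_mem_nhdsWithin.mono (fun ε hε => hcell ε hε))

end Aux
namespace Aux

lemma cell_subset_closure {n N : ℕ} (hn : 1 ≤ n) (hN : 1 ≤ N) {a c : ZMod n → Fin N}
    (hsa : Step n N a) (hac : ∀ i, a i ≤ c i) : cellN n N c ⊆ closure (cellN n N a) := by
  intro L hL
  apply mem_closure_cellN hn hN hsa
  intro i
  constructor
  · obtain ⟨cc, hcc⟩ := (mem_QGN_iff (repT L)).1 (by rw [MkT_repT]; exact hL.1) i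
    exact (dep_iff ((repT L) (i + 1)).2).2 ⟨cc, hcc⟩
  · intro k hk
    obtain ⟨v, hv, hmk, -, hvan⟩ := hL.2 i
    obtain ⟨γ, hγ⟩ := (Projectivization.mk_eq_mk_iff ℂ _ _ ((L i).rep_nonzero) hv).1
      (by rw [← hmk]; exact (L i).mk_rep)
    have h2 : (L i).rep k = (γ : ℂ) * v k := by rw [← hγ]; rfl
    have h3 : k < c i := by
      rw [Fin.lt_def]
      have h4 := hac i
      rw [Fin.le_def] at h4
      omega
    show (L i).rep k = 0
    rw [h2, hvan k h3, mul_zero]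

end Aux

theorem statement_14 (n N : ℕ) (hn : 1 ≤ n) (hN : 1 ≤ N)
    (p q : ZMod n → ℙ ℂ (Fin N → ℂ)) (a b : ZMod n → Fin N)
    (hp : IsFixedPtN n N p a) (hq : IsFixedPtN n N q b) :
    IsFixedPtN n N
      (fun i => Projectivization.mk ℂ (eN (max (a i) (b i))) (eN_ne_zero _))
      (fun i => max (a i) (b i)) ∧
    {i : ZMod n | ((max (a i) (b i) : Fin N) : ℕ) = N - 1} =
      {i : ZMod n | (a i : ℕ) = N - 1} ∪ {i : ZMod n | (b i : ℕ) = N - 1} ∧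
    closure (cellN n N a) ∩ closure (cellN n N b) =
      closure (cellN n N (fun i => max (a i) (b i))) := by
  have hsa := Aux.step_of_fixed hp
  have hsb := Aux.step_of_fixed hq
  have hsc := Aux.step_max hsa hsb
  refine ⟨Aux.isFixedPt_max hp hq, Aux.breakset_eq a b, ?_⟩
  apply Set.Subset.antisymm
  · rintro L ⟨hA, hB⟩
    have hua := Aux.repT_mem_UpZ_of_closure hA
    have hub := Aux.repT_mem_UpZ_of_closure hB
    have huc : Aux.repT L ∈ Aux.UpZ n N (fun i => max (a i) (b i)) := by
      intro i
      refine ⟨(hua i).1, ?_⟩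
      intro k hk
      rw [Aux.finValMax] at hk
      rcases Nat.lt_or_ge (k : ℕ) ((a i) : ℕ) with h | h
      · exact (hua i).2 k h
      · exact (hub i).2 k (by omega)
    exact Aux.mem_closure_cellN hn hN hsc huc
  · refine closure_minimal ?_ (IsClosed.inter isClosed_closure isClosed_closure)
    intro L hL
    exact ⟨Aux.cell_subset_closure hn hN hsa (fun i => le_max_left _ _) hL,
      Aux.cell_subset_closure hn hN hsb (fun i => le_max_right _ _) hL⟩
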